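/- Let T be a braided self-adjoint contraction on H ⊗ H. For any X ∈ ker P_n ⊆ H^{⊗n} and any Y ∈ H^{⊗m}, the tensor X ⊗ Y lies in ker P_{n+m}. -/

import Mathlib

open scoped ComplexOrder

namespace Wick

/-- The operator `T_i = 1^{⊗(i-1)} ⊗ T ⊗ 1^{⊗(n-i-1)}` on `H^{⊗n}` (1-indexed, acting on
tensor factors `i` and `i+1`), where `H = ℂ^d` and `H^{⊗n}` is identified with
functions `(Fin n → Fin d) → ℂ` via the basis of elementary tensors. -/
noncomputable def Ti (d n : ℕ) (T : Matrix (Fin d × Fin d) (Fin d × Fin d) ℂ) (i : ℕ) :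
    Matrix (Fin n → Fin d) (Fin n → Fin d) ℂ :=
  if h : 1 ≤ i ∧ i < n then
    fun w w' =>
      T (w ⟨i - 1, by omega⟩, w ⟨i, h.2⟩) (w' ⟨i - 1, by omega⟩, w' ⟨i, h.2⟩) *
        ∏ j : Fin n, if (j : ℕ) = i - 1 ∨ (j : ℕ) = i then 1 else (if w j = w' j then 1 else 0)
  else 1

/-- The product `T_1 T_2 ⋯ T_k` on `H^{⊗n}`. -/
noncomputable def prodT (d n : ℕ) (T : Matrix (Fin d × Fin d) (Fin d × Fin d) ℂ) (k : ℕ) :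
    Matrix (Fin n → Fin d) (Fin n → Fin d) ℂ :=
  ((List.range k).map (fun j => Ti d n T (j + 1))).prod

/-- The reversed product `T_k T_{k-1} ⋯ T_1` on `H^{⊗n}`. -/
noncomputable def prodTrev (d n : ℕ) (T : Matrix (Fin d × Fin d) (Fin d × Fin d) ℂ) (k : ℕ) :
    Matrix (Fin n → Fin d) (Fin n → Fin d) ℂ :=
  ((List.range k).map (fun j => Ti d n T (k - j))).prod

/-- `R_n = 1 + T_1 + T_1 T_2 + ⋯ + T_1 T_2 ⋯ T_{n-1}` on `H^{⊗n}`. -/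
noncomputable def Rmat (d n : ℕ) (T : Matrix (Fin d × Fin d) (Fin d × Fin d) ℂ) :
    Matrix (Fin n → Fin d) (Fin n → Fin d) ℂ :=
  ∑ k ∈ Finset.range n, prodT d n T k

/-- `1 ⊗ A` on `H^{⊗(n+1)}`, for `A` an operator on `H^{⊗n}`. -/
noncomputable def oneTensor (d n : ℕ) (A : Matrix (Fin n → Fin d) (Fin n → Fin d) ℂ) :
    Matrix (Fin (n + 1) → Fin d) (Fin (n + 1) → Fin d) ℂ :=
  fun w w' => (if w 0 = w' 0 then 1 else 0) * A (fun j => w j.succ) (fun j => w' j.succ)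

/-- `A ⊗ 1` on `H^{⊗(n+1)}`, for `A` an operator on `H^{⊗n}`. -/
noncomputable def tensorOne (d n : ℕ) (A : Matrix (Fin n → Fin d) (Fin n → Fin d) ℂ) :
    Matrix (Fin (n + 1) → Fin d) (Fin (n + 1) → Fin d) ℂ :=
  fun w w' =>
    A (fun j => w j.castSucc) (fun j => w' j.castSucc) *
      (if w (Fin.last n) = w' (Fin.last n) then 1 else 0)

/-- The operators `P_n` on `H^{⊗n}`: `P_1 = 1`, `P_{n+1} = (1 ⊗ P_n) R_{n+1}`
(so `P_2 = R_2 = 1 + T`). -/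
noncomputable def Pmat (d : ℕ) (T : Matrix (Fin d × Fin d) (Fin d × Fin d) ℂ) :
    (n : ℕ) → Matrix (Fin n → Fin d) (Fin n → Fin d) ℂ
  | 0 => 1
  | n + 1 => oneTensor d n (Pmat d T n) * Rmat d (n + 1) T

/-- `U_n = (T_1 ⋯ T_n)(T_1 ⋯ T_{n-1}) ⋯ (T_1 T_2) T_1` on `H^{⊗m}`. -/
noncomputable def Umat (d m : ℕ) (T : Matrix (Fin d × Fin d) (Fin d × Fin d) ℂ) (n : ℕ) :
    Matrix (Fin m → Fin d) (Fin m → Fin d) ℂ :=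
  ((List.range n).map (fun j => prodT d m T (n - j))).prod

/-- The braid condition `T_1 T_2 T_1 = T_2 T_1 T_2` on `H^{⊗3}`. -/
def Braided (d : ℕ) (T : Matrix (Fin d × Fin d) (Fin d × Fin d) ℂ) : Prop :=
  Ti d 3 T 1 * Ti d 3 T 2 * Ti d 3 T 1 = Ti d 3 T 2 * Ti d 3 T 1 * Ti d 3 T 2

/-- Elementary tensor `X ⊗ Y ∈ H^{⊗(n+m)}`. -/
noncomputable def tensorVec {d n m : ℕ} (X : (Fin n → Fin d) → ℂ) (Y : (Fin m → Fin d) → ℂ) :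
    (Fin (n + m) → Fin d) → ℂ :=
  fun u => X (fun i => u (Fin.castAdd m i)) * Y (fun j => u (Fin.natAdd n j))



/-! ### Auxiliary machinery -/

section Aux

variable {d : ℕ} {T : Matrix (Fin d × Fin d) (Fin d × Fin d) ℂ}

/-- Splitting `H^{⊗(n+1)} = H ⊗ H^{⊗n}` on basis labels. -/
def consE (d n : ℕ) : (Fin d × (Fin n → Fin d)) ≃ (Fin (n + 1) → Fin d) where
  toFun p := Fin.cons p.1 p.2
  invFun u := (u 0, fun j => u j.succ)
  left_inv p := by
    cases p with
    | mk a v => simp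
  right_inv u := by
    funext j
    refine Fin.cases ?_ (fun i => ?_) j <;> simp

/-- Splitting `H^{⊗(n+1)} = H^{⊗n} ⊗ H` on basis labels. -/
def snocE (d n : ℕ) : (Fin d × (Fin n → Fin d)) ≃ (Fin (n + 1) → Fin d) where
  toFun p := Fin.snoc p.2 p.1
  invFun u := (u (Fin.last n), fun j => u j.castSucc)
  left_inv p := by
    cases p with
    | mk a v => simp
  right_inv u := by
    funext j
    refine Fin.lastCases ?_ (fun i => ?_) j <;> simp

/-- Splitting `H^{⊗(n+m)} = H^{⊗n} ⊗ H^{⊗m}` on basis labels. -/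
def splitE (d n m : ℕ) : ((Fin n → Fin d) × (Fin m → Fin d)) ≃ (Fin (n + m) → Fin d) where
  toFun p := fun u => Sum.elim p.1 p.2 (finSumFinEquiv.symm u)
  invFun u := (fun i => u (Fin.castAdd m i), fun j => u (Fin.natAdd n j))
  left_inv p := by
    cases p with
    | mk v v' =>
      simp only [Prod.mk.injEq]
      constructor
      · funext i; simp
      · funext j; simp
  right_inv u := by
    funext x
    rcases h : finSumFinEquiv.symm x with i | j
    · have hx : x = Fin.castAdd m i := by
        have := congrArg finSumFinEquiv h
        simpa using this
      simp [hx]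
    · have hx : x = Fin.natAdd n j := by
        have := congrArg finSumFinEquiv h
        simpa using this
      simp [hx]

lemma splitE_castAdd {n m : ℕ} (v : Fin n → Fin d) (v' : Fin m → Fin d) (i : Fin n) :
    splitE d n m (v, v') (Fin.castAdd m i) = v i := by
  simp [splitE]

lemma splitE_natAdd {n m : ℕ} (v : Fin n → Fin d) (v' : Fin m → Fin d) (j : Fin m) :
    splitE d n m (v, v') (Fin.natAdd n j) = v' j := by
  simp [splitE]

lemma prod_delta {κ : Type*} [Fintype κ] (f g : κ → Fin d) :
    (∏ k : κ, if f k = g k then (1 : ℂ) else 0) = if f = g then 1 else 0 := by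
  by_cases h : f = g
  · simp [h]
  · rw [if_neg h]
    obtain ⟨k, hk⟩ := Function.ne_iff.mp h
    exact Finset.prod_eq_zero (Finset.mem_univ k) (if_neg hk)

/-! #### Algebraic properties of `oneTensor` and `tensorOne` -/

lemma oneTensor_one {n : ℕ} : oneTensor d n (1 : Matrix (Fin n → Fin d) (Fin n → Fin d) ℂ) = 1 := by
  funext w w'
  have key : (w = w') ↔ (w 0 = w' 0 ∧ (fun j : Fin n => w j.succ) = fun j => w' j.succ) := by
    constructor
    · rintro rfl; exact ⟨rfl, rfl⟩
    · rintro ⟨h0, hs⟩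
      funext j
      refine Fin.cases h0 (fun i => ?_) j
      exact congrFun hs i
  simp only [oneTensor, Matrix.one_apply]
  by_cases h0 : w 0 = w' 0 <;>
    by_cases hs : (fun j : Fin n => w j.succ) = (fun j => w' j.succ) <;>
    simp [h0, hs, key]

lemma tensorOne_one {n : ℕ} : tensorOne d n (1 : Matrix (Fin n → Fin d) (Fin n → Fin d) ℂ) = 1 := by
  funext w w'
  have key : (w = w') ↔
      ((fun j : Fin n => w j.castSucc) = (fun j => w' j.castSucc) ∧
        w (Fin.last n) = w' (Fin.last n)) := by
    constructor
    · rintro rfl; exact ⟨rfl, rfl⟩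
    · rintro ⟨hs, h0⟩
      funext j
      refine Fin.lastCases h0 (fun i => ?_) j
      exact congrFun hs i
  simp only [tensorOne, Matrix.one_apply]
  by_cases h0 : w (Fin.last n) = w' (Fin.last n) <;>
    by_cases hs : (fun j : Fin n => w j.castSucc) = (fun j => w' j.castSucc) <;>
    simp [h0, hs, key]

lemma oneTensor_zero {n : ℕ} : oneTensor d n (0 : Matrix (Fin n → Fin d) (Fin n → Fin d) ℂ) = 0 := by
  funext w w'
  simp [oneTensor]

lemma tensorOne_zero {n : ℕ} : tensorOne d n (0 : Matrix (Fin n → Fin d) (Fin n → Fin d) ℂ) = 0 := by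
  funext w w'
  simp [tensorOne]

lemma oneTensor_add {n : ℕ} (A B : Matrix (Fin n → Fin d) (Fin n → Fin d) ℂ) :
    oneTensor d n (A + B) = oneTensor d n A + oneTensor d n B := by
  funext w w'
  simp only [oneTensor, Matrix.add_apply]
  ring

lemma tensorOne_add {n : ℕ} (A B : Matrix (Fin n → Fin d) (Fin n → Fin d) ℂ) :
    tensorOne d n (A + B) = tensorOne d n A + tensorOne d n B := by
  funext w w'
  simp only [tensorOne, Matrix.add_apply]
  ring

lemma oneTensor_mul {n : ℕ} (A B : Matrix (Fin n → Fin d) (Fin n → Fin d) ℂ) :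
    oneTensor d n (A * B) = oneTensor d n A * oneTensor d n B := by
  funext w w'
  simp only [oneTensor, Matrix.mul_apply]
  rw [← Fintype.sum_equiv (consE d n)
      (fun p => ((if w 0 = p.1 then (1 : ℂ) else 0) * A (fun j => w j.succ) p.2) *
        ((if p.1 = w' 0 then (1 : ℂ) else 0) * B p.2 fun j => w' j.succ))
      (fun u => ((if w 0 = u 0 then (1 : ℂ) else 0) * A (fun j => w j.succ) fun j => u j.succ) *
        ((if u 0 = w' 0 then (1 : ℂ) else 0) * B (fun j => u j.succ) fun j => w' j.succ))
      (fun p => by simp [consE])]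
  rw [Fintype.sum_prod_type]
  symm
  calc
    (∑ a : Fin d, ∑ v : Fin n → Fin d,
        ((if w 0 = a then (1 : ℂ) else 0) * A (fun j => w j.succ) v) *
          ((if a = w' 0 then (1 : ℂ) else 0) * B v fun j => w' j.succ))
        = ∑ a : Fin d, ∑ v : Fin n → Fin d,
            ((if w 0 = a then (1 : ℂ) else 0) * (if a = w' 0 then (1 : ℂ) else 0)) *
              (A (fun j => w j.succ) v * B v fun j => w' j.succ) :=
      Finset.sum_congr rfl fun a _ => Finset.sum_congr rfl fun v _ => by ring
    _ = (∑ a : Fin d, (if w 0 = a then (1 : ℂ) else 0) * (if a = w' 0 then (1 : ℂ) else 0)) *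
          ∑ v : Fin n → Fin d, A (fun j => w j.succ) v * B v fun j => w' j.succ := by
      rw [Finset.sum_mul]
      exact Finset.sum_congr rfl fun a _ => by rw [Finset.mul_sum]
    _ = (if w 0 = w' 0 then (1 : ℂ) else 0) *
          ∑ v : Fin n → Fin d, A (fun j => w j.succ) v * B v fun j => w' j.succ := by
      congr 1
      simp only [ite_mul, one_mul, zero_mul, Finset.sum_ite_eq, Finset.mem_univ, if_true]

lemma tensorOne_mul {n : ℕ} (A B : Matrix (Fin n → Fin d) (Fin n → Fin d) ℂ) :
    tensorOne d n (A * B) = tensorOne d n A * tensorOne d n B := by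
  funext w w'
  simp only [tensorOne, Matrix.mul_apply]
  rw [← Fintype.sum_equiv (snocE d n)
      (fun p => (A (fun j => w j.castSucc) p.2 * (if w (Fin.last n) = p.1 then (1 : ℂ) else 0)) *
        (B p.2 (fun j => w' j.castSucc) * (if p.1 = w' (Fin.last n) then (1 : ℂ) else 0)))
      (fun u => (A (fun j => w j.castSucc) (fun j => u j.castSucc) *
          (if w (Fin.last n) = u (Fin.last n) then (1 : ℂ) else 0)) *
        (B (fun j => u j.castSucc) (fun j => w' j.castSucc) *
          (if u (Fin.last n) = w' (Fin.last n) then (1 : ℂ) else 0)))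
      (fun p => by simp [snocE])]
  rw [Fintype.sum_prod_type]
  symm
  calc
    (∑ a : Fin d, ∑ v : Fin n → Fin d,
        (A (fun j => w j.castSucc) v * (if w (Fin.last n) = a then (1 : ℂ) else 0)) *
          (B v (fun j => w' j.castSucc) * (if a = w' (Fin.last n) then (1 : ℂ) else 0)))
        = ∑ a : Fin d, ∑ v : Fin n → Fin d,
            ((if w (Fin.last n) = a then (1 : ℂ) else 0) *
              (if a = w' (Fin.last n) then (1 : ℂ) else 0)) *
              (A (fun j => w j.castSucc) v * B v fun j => w' j.castSucc) :=
      Finset.sum_congr rfl fun a _ => Finset.sum_congr rfl fun v _ => by ring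
    _ = (∑ a : Fin d, (if w (Fin.last n) = a then (1 : ℂ) else 0) *
            (if a = w' (Fin.last n) then (1 : ℂ) else 0)) *
          ∑ v : Fin n → Fin d, A (fun j => w j.castSucc) v * B v fun j => w' j.castSucc := by
      rw [Finset.sum_mul]
      exact Finset.sum_congr rfl fun a _ => by rw [Finset.mul_sum]
    _ = (if w (Fin.last n) = w' (Fin.last n) then (1 : ℂ) else 0) *
          ∑ v : Fin n → Fin d, A (fun j => w j.castSucc) v * B v fun j => w' j.castSucc := by
      congr 1
      simp only [ite_mul, one_mul, zero_mul, Finset.sum_ite_eq, Finset.mem_univ, if_true]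
    _ = (∑ v : Fin n → Fin d, A (fun j => w j.castSucc) v * B v fun j => w' j.castSucc) *
          (if w (Fin.last n) = w' (Fin.last n) then (1 : ℂ) else 0) := by ring

lemma oneTensor_sum {n : ℕ} {ι : Type*} (s : Finset ι)
    (f : ι → Matrix (Fin n → Fin d) (Fin n → Fin d) ℂ) :
    oneTensor d n (∑ k ∈ s, f k) = ∑ k ∈ s, oneTensor d n (f k) := by
  classical
  induction s using Finset.induction with
  | empty => simp [oneTensor_zero]
  | insert _ _ h ih => rw [Finset.sum_insert h, Finset.sum_insert h, oneTensor_add, ih]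

lemma tensorOne_sum {n : ℕ} {ι : Type*} (s : Finset ι)
    (f : ι → Matrix (Fin n → Fin d) (Fin n → Fin d) ℂ) :
    tensorOne d n (∑ k ∈ s, f k) = ∑ k ∈ s, tensorOne d n (f k) := by
  classical
  induction s using Finset.induction with
  | empty => simp [tensorOne_zero]
  | insert _ _ h ih => rw [Finset.sum_insert h, Finset.sum_insert h, tensorOne_add, ih]

lemma oneTensor_tensorOne {n : ℕ} (A : Matrix (Fin n → Fin d) (Fin n → Fin d) ℂ) :
    oneTensor d (n + 1) (tensorOne d n A) = tensorOne d (n + 1) (oneTensor d n A) := by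
  funext w w'
  simp only [oneTensor, tensorOne, Fin.succ_castSucc, Fin.succ_last, Fin.castSucc_zero]
  by_cases h : w 0 = w' 0 <;> simp [h]

/-! #### Entry formula for `Ti` and embeddings -/

lemma Ti_apply {n i : ℕ} (h1 : 1 ≤ i) (h2 : i < n) (w w' : Fin n → Fin d) :
    Ti d n T i w w' =
      T (w ⟨i - 1, by omega⟩, w ⟨i, h2⟩) (w' ⟨i - 1, by omega⟩, w' ⟨i, h2⟩) *
        ∏ j : Fin n, if (j : ℕ) = i - 1 ∨ (j : ℕ) = i then 1
          else (if w j = w' j then 1 else 0) := by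
  simp only [Ti]
  exact congrArg (fun M : Matrix (Fin n → Fin d) (Fin n → Fin d) ℂ => M w w')
    (dif_pos (⟨h1, h2⟩ : 1 ≤ i ∧ i < n))

/-- Kronecker product of operators on basis labels. -/
noncomputable def kron (d n m : ℕ) (A : Matrix (Fin n → Fin d) (Fin n → Fin d) ℂ)
    (B : Matrix (Fin m → Fin d) (Fin m → Fin d) ℂ) :
    Matrix (Fin (n + m) → Fin d) (Fin (n + m) → Fin d) ℂ :=
  fun w w' =>
    A (fun i => w (Fin.castAdd m i)) (fun i => w' (Fin.castAdd m i)) *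
      B (fun j => w (Fin.natAdd n j)) (fun j => w' (Fin.natAdd n j))

lemma kron_mul {n m : ℕ} (A A' : Matrix (Fin n → Fin d) (Fin n → Fin d) ℂ)
    (B B' : Matrix (Fin m → Fin d) (Fin m → Fin d) ℂ) :
    kron d n m A B * kron d n m A' B' = kron d n m (A * A') (B * B') := by
  funext w w'
  simp only [kron, Matrix.mul_apply]
  rw [← Fintype.sum_equiv (splitE d n m)
      (fun p => (A (fun i => w (Fin.castAdd m i)) p.1 * B (fun j => w (Fin.natAdd n j)) p.2) *
        (A' p.1 (fun i => w' (Fin.castAdd m i)) * B' p.2 fun j => w' (Fin.natAdd n j)))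
      (fun u => (A (fun i => w (Fin.castAdd m i)) (fun i => u (Fin.castAdd m i)) *
          B (fun j => w (Fin.natAdd n j)) fun j => u (Fin.natAdd n j)) *
        (A' (fun i => u (Fin.castAdd m i)) (fun i => w' (Fin.castAdd m i)) *
          B' (fun j => u (Fin.natAdd n j)) fun j => w' (Fin.natAdd n j)))
      (fun p => by
        cases p with
        | mk v v' => simp [splitE_castAdd, splitE_natAdd])]
  rw [Fintype.sum_prod_type]
  calc
    (∑ v : Fin n → Fin d, ∑ v' : Fin m → Fin d,
        (A (fun i => w (Fin.castAdd m i)) v * B (fun j => w (Fin.natAdd n j)) v') *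
          (A' v (fun i => w' (Fin.castAdd m i)) * B' v' fun j => w' (Fin.natAdd n j)))
        = ∑ v : Fin n → Fin d, ∑ v' : Fin m → Fin d,
            (A (fun i => w (Fin.castAdd m i)) v * A' v fun i => w' (Fin.castAdd m i)) *
              (B (fun j => w (Fin.natAdd n j)) v' * B' v' fun j => w' (Fin.natAdd n j)) :=
      Finset.sum_congr rfl fun v _ => Finset.sum_congr rfl fun v' _ => by ring
    _ = (∑ v : Fin n → Fin d, A (fun i => w (Fin.castAdd m i)) v * A' v fun i => w' (Fin.castAdd m i)) *
          ∑ v' : Fin m → Fin d, B (fun j => w (Fin.natAdd n j)) v' * B' v' fun j => w' (Fin.natAdd n j) := by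
      rw [Finset.sum_mul]
      exact Finset.sum_congr rfl fun v _ => by rw [Finset.mul_sum]

lemma Ti_kron_left {n m i : ℕ} (h1 : 1 ≤ i) (h2 : i < n) :
    Ti d (n + m) T i = kron d n m (Ti d n T i) 1 := by
  funext w w'
  simp only [kron]
  rw [Ti_apply h1 (show i < n + m by omega), Ti_apply h1 h2, Fin.prod_univ_add,
    Matrix.one_apply]
  have hnat : (∏ j : Fin m, if ((Fin.natAdd n j : Fin (n + m)) : ℕ) = i - 1 ∨
        ((Fin.natAdd n j : Fin (n + m)) : ℕ) = i then (1 : ℂ)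
        else (if w (Fin.natAdd n j) = w' (Fin.natAdd n j) then 1 else 0))
      = if (fun j : Fin m => w (Fin.natAdd n j)) = (fun j => w' (Fin.natAdd n j)) then (1 : ℂ)
        else 0 := by
    rw [← prod_delta (fun j : Fin m => w (Fin.natAdd n j)) fun j => w' (Fin.natAdd n j)]
    refine Finset.prod_congr rfl fun j _ => ?_
    rw [if_neg]
    simp only [Fin.coe_natAdd]
    omega
  rw [hnat]
  have hcast : (∏ j : Fin n, if ((Fin.castAdd m j : Fin (n + m)) : ℕ) = i - 1 ∨
        ((Fin.castAdd m j : Fin (n + m)) : ℕ) = i then (1 : ℂ)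
        else (if w (Fin.castAdd m j) = w' (Fin.castAdd m j) then 1 else 0))
      = ∏ j : Fin n, if (j : ℕ) = i - 1 ∨ (j : ℕ) = i then (1 : ℂ)
        else (if w (Fin.castAdd m j) = w' (Fin.castAdd m j) then 1 else 0) := by
    refine Finset.prod_congr rfl fun j _ => ?_
    rw [Fin.coe_castAdd]
  rw [hcast]
  have hT : T (w ⟨i - 1, by omega⟩, w ⟨i, by omega⟩) (w' ⟨i - 1, by omega⟩, w' ⟨i, by omega⟩)
      = T ((fun i' : Fin n => w (Fin.castAdd m i')) ⟨i - 1, by omega⟩,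
          (fun i' : Fin n => w (Fin.castAdd m i')) ⟨i, h2⟩)
        ((fun i' : Fin n => w' (Fin.castAdd m i')) ⟨i - 1, by omega⟩,
          (fun i' : Fin n => w' (Fin.castAdd m i')) ⟨i, h2⟩) := rfl
  rw [← mul_assoc, ← hT]

lemma Ti_kron_right {n m i : ℕ} (h1 : 1 ≤ i) (h2 : i < m) :
    Ti d (n + m) T (n + i) = kron d n m 1 (Ti d m T i) := by
  funext w w'
  simp only [kron]
  rw [Ti_apply (show 1 ≤ n + i by omega) (show n + i < n + m by omega),
    Ti_apply h1 h2, Fin.prod_univ_add, Matrix.one_apply]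
  have hcast : (∏ j : Fin n, if ((Fin.castAdd m j : Fin (n + m)) : ℕ) = n + i - 1 ∨
        ((Fin.castAdd m j : Fin (n + m)) : ℕ) = n + i then (1 : ℂ)
        else (if w (Fin.castAdd m j) = w' (Fin.castAdd m j) then 1 else 0))
      = if (fun j : Fin n => w (Fin.castAdd m j)) = (fun j => w' (Fin.castAdd m j)) then (1 : ℂ)
        else 0 := by
    rw [← prod_delta (fun j : Fin n => w (Fin.castAdd m j)) fun j => w' (Fin.castAdd m j)]
    refine Finset.prod_congr rfl fun j _ => ?_
    rw [if_neg]
    simp only [Fin.coe_castAdd]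
    have := j.isLt
    omega
  rw [hcast]
  have hnat : (∏ j : Fin m, if ((Fin.natAdd n j : Fin (n + m)) : ℕ) = n + i - 1 ∨
        ((Fin.natAdd n j : Fin (n + m)) : ℕ) = n + i then (1 : ℂ)
        else (if w (Fin.natAdd n j) = w' (Fin.natAdd n j) then 1 else 0))
      = ∏ j : Fin m, if (j : ℕ) = i - 1 ∨ (j : ℕ) = i then (1 : ℂ)
        else (if w (Fin.natAdd n j) = w' (Fin.natAdd n j) then 1 else 0) := by
    refine Finset.prod_congr rfl fun j _ => ?_
    refine if_congr ?_ rfl rfl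
    simp only [Fin.coe_natAdd]
    omega
  rw [hnat]
  have e1 : (⟨n + i - 1, by omega⟩ : Fin (n + m)) = Fin.natAdd n (⟨i - 1, by omega⟩ : Fin m) :=
    Fin.ext (by simp only [Fin.coe_natAdd]; omega)
  have e2 : (⟨n + i, by omega⟩ : Fin (n + m)) = Fin.natAdd n (⟨i, h2⟩ : Fin m) :=
    Fin.ext (by simp only [Fin.coe_natAdd])
  rw [e1, e2]
  ring

lemma Ti_comm {N i j : ℕ} (h1 : 1 ≤ i) (h2 : i + 2 ≤ j) (h3 : j < N) :
    Ti d N T i * Ti d N T j = Ti d N T j * Ti d N T i := by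
  obtain ⟨j', rfl⟩ : ∃ j', j = (i + 1) + j' := ⟨j - (i + 1), by omega⟩
  obtain ⟨m, rfl⟩ : ∃ m, N = (i + 1) + m := ⟨N - (i + 1), by omega⟩
  have hj' : 1 ≤ j' := by omega
  have hj'm : j' < m := by omega
  rw [Ti_kron_left (T := T) h1 (show i < i + 1 by omega),
    Ti_kron_right (T := T) hj' hj'm, kron_mul, kron_mul, one_mul, mul_one, one_mul, mul_one]

lemma tensorOne_Ti {n i : ℕ} (h1 : 1 ≤ i) (h2 : i < n) :
    tensorOne d n (Ti d n T i) = Ti d (n + 1) T i := by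
  have : Ti d (n + 1) T i = kron d n 1 (Ti d n T i) 1 := Ti_kron_left h1 h2
  rw [this]
  funext w w'
  simp only [tensorOne, kron, Matrix.one_apply]
  have h3 : (fun j : Fin n => w j.castSucc) = fun i' : Fin n => w (Fin.castAdd 1 i') := rfl
  have h4 : (fun j : Fin n => w' j.castSucc) = fun i' : Fin n => w' (Fin.castAdd 1 i') := rfl
  rw [h3, h4]
  congr 1
  have h5 : ((fun j : Fin 1 => w (Fin.natAdd n j)) = fun j => w' (Fin.natAdd n j)) ↔
      w (Fin.last n) = w' (Fin.last n) := by
    constructor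
    · intro h
      have := congrFun h 0
      simpa [show Fin.natAdd n (0 : Fin 1) = Fin.last n from Fin.ext (by simp)] using this
    · intro h
      funext j
      have hj : j = 0 := Subsingleton.elim _ _
      subst hj
      simpa [show Fin.natAdd n (0 : Fin 1) = Fin.last n from Fin.ext (by simp)] using h
  rw [if_congr h5.symm rfl rfl]

lemma oneTensor_Ti {n i : ℕ} (h1 : 1 ≤ i) (h2 : i < n) :
    oneTensor d n (Ti d n T i) = Ti d (n + 1) T (i + 1) := by
  funext w w'
  simp only [oneTensor]
  rw [Ti_apply h1 h2, Ti_apply (show 1 ≤ i + 1 by omega) (show i + 1 < n + 1 by omega),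
    Fin.prod_univ_succ]
  have hzero : (if ((0 : Fin (n + 1)) : ℕ) = i + 1 - 1 ∨ ((0 : Fin (n + 1)) : ℕ) = i + 1 then (1 : ℂ)
      else (if w 0 = w' 0 then 1 else 0)) = if w 0 = w' 0 then 1 else 0 := by
    rw [if_neg]
    simp only [Fin.val_zero]
    omega
  rw [hzero]
  have hprod : (∏ j : Fin n, if ((j.succ : Fin (n + 1)) : ℕ) = i + 1 - 1 ∨
        ((j.succ : Fin (n + 1)) : ℕ) = i + 1 then (1 : ℂ)
        else (if w j.succ = w' j.succ then 1 else 0))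
      = ∏ j : Fin n, if (j : ℕ) = i - 1 ∨ (j : ℕ) = i then (1 : ℂ)
        else (if w j.succ = w' j.succ then 1 else 0) := by
    refine Finset.prod_congr rfl fun j _ => ?_
    refine if_congr ?_ rfl rfl
    simp only [Fin.val_succ]
    omega
  rw [hprod]
  have e1 : (⟨i + 1 - 1, by omega⟩ : Fin (n + 1)) = (⟨i - 1, by omega⟩ : Fin n).succ :=
    Fin.ext (by simp only [Fin.val_succ]; omega)
  have e2 : (⟨i + 1, by omega⟩ : Fin (n + 1)) = (⟨i, h2⟩ : Fin n).succ :=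
    Fin.ext (by simp only [Fin.val_succ])
  rw [e1, e2]
  ring

/-! #### The braid relation in general position -/

lemma braid_up (hb : Braided d T) :
    ∀ a : ℕ, Ti d (a + 3) T (a + 1) * Ti d (a + 3) T (a + 2) * Ti d (a + 3) T (a + 1) =
      Ti d (a + 3) T (a + 2) * Ti d (a + 3) T (a + 1) * Ti d (a + 3) T (a + 2)
  | 0 => hb
  | (a + 1) => by
    have h := congrArg (oneTensor d (a + 3)) (braid_up hb a)
    rw [oneTensor_mul, oneTensor_mul, oneTensor_mul, oneTensor_mul,
      oneTensor_Ti (by omega) (by omega), oneTensor_Ti (by omega) (by omega)] at h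
    exact h

lemma braid_ext (hb : Braided d T) :
    ∀ (t a : ℕ), Ti d (a + 3 + t) T (a + 1) * Ti d (a + 3 + t) T (a + 2) * Ti d (a + 3 + t) T (a + 1) =
      Ti d (a + 3 + t) T (a + 2) * Ti d (a + 3 + t) T (a + 1) * Ti d (a + 3 + t) T (a + 2)
  | 0, a => braid_up hb a
  | (t + 1), a => by
    have h := congrArg (tensorOne d (a + 3 + t)) (braid_ext hb t a)
    rw [tensorOne_mul, tensorOne_mul, tensorOne_mul, tensorOne_mul,
      tensorOne_Ti (by omega) (by omega), tensorOne_Ti (by omega) (by omega)] at h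
    exact h

lemma braid_gen (hb : Braided d T) {N i : ℕ} (h1 : 1 ≤ i) (h2 : i + 1 < N) :
    Ti d N T i * Ti d N T (i + 1) * Ti d N T i =
      Ti d N T (i + 1) * Ti d N T i * Ti d N T (i + 1) := by
  obtain ⟨a, rfl⟩ : ∃ a, i = a + 1 := ⟨i - 1, by omega⟩
  obtain ⟨t, rfl⟩ : ∃ t, N = a + 3 + t := ⟨N - (a + 3), by omega⟩
  exact braid_ext hb t a

/-! #### The commutation relation for the long cycle -/

lemma prodT_zero {N : ℕ} : prodT d N T 0 = 1 := by
  simp [prodT]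

lemma prodT_succ {N k : ℕ} : prodT d N T (k + 1) = prodT d N T k * Ti d N T (k + 1) := by
  rw [prodT, prodT, List.range_succ, List.map_append, List.prod_append]
  simp

lemma commute_Ti_prodT {N i k : ℕ} (hik : k + 2 ≤ i) (hiN : i < N) :
    Commute (prodT d N T k) (Ti d N T i) := by
  rw [prodT]
  apply Commute.list_prod_left
  intro x hx
  simp only [List.mem_map, List.mem_range] at hx
  obtain ⟨j, hj, rfl⟩ := hx
  exact Ti_comm (by omega) (by omega) hiN

lemma c_Ti_aux (hb : Braided d T) {a : ℕ} :
    ∀ (s : ℕ) (N : ℕ), a + 3 + s ≤ N →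
      prodT d N T (a + 1 + 1 + s) * Ti d N T (a + 1) =
        Ti d N T (a + 1 + 1) * prodT d N T (a + 1 + 1 + s)
  | 0, N, hN => by
    show prodT d N T (a + 1 + 1) * Ti d N T (a + 1) =
      Ti d N T (a + 1 + 1) * prodT d N T (a + 1 + 1)
    rw [prodT_succ, prodT_succ]
    have hbr : Ti d N T (a + 1) * Ti d N T (a + 1 + 1) * Ti d N T (a + 1) =
        Ti d N T (a + 1 + 1) * Ti d N T (a + 1) * Ti d N T (a + 1 + 1) :=
      braid_gen hb (by omega) (by omega)
    have hc : Commute (prodT d N T a) (Ti d N T (a + 1 + 1)) :=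
      commute_Ti_prodT (by omega) (by omega)
    calc prodT d N T a * Ti d N T (a + 1) * Ti d N T (a + 1 + 1) * Ti d N T (a + 1)
        = prodT d N T a * (Ti d N T (a + 1) * Ti d N T (a + 1 + 1) * Ti d N T (a + 1)) := by
          simp only [mul_assoc]
      _ = prodT d N T a * (Ti d N T (a + 1 + 1) * Ti d N T (a + 1) * Ti d N T (a + 1 + 1)) := by
          rw [hbr]
      _ = prodT d N T a * Ti d N T (a + 1 + 1) * (Ti d N T (a + 1) * Ti d N T (a + 1 + 1)) := by
          simp only [mul_assoc]
      _ = Ti d N T (a + 1 + 1) * prodT d N T a * (Ti d N T (a + 1) * Ti d N T (a + 1 + 1)) := by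
          rw [hc.eq]
      _ = Ti d N T (a + 1 + 1) * (prodT d N T a * Ti d N T (a + 1) * Ti d N T (a + 1 + 1)) := by
          simp only [mul_assoc]
  | (s + 1), N, hN => by
    show prodT d N T (a + 1 + 1 + s + 1) * Ti d N T (a + 1) =
      Ti d N T (a + 1 + 1) * prodT d N T (a + 1 + 1 + s + 1)
    rw [prodT_succ]
    have hc : Commute (Ti d N T (a + 1)) (Ti d N T (a + 1 + 1 + s + 1)) :=
      Ti_comm (by omega) (by omega) (by omega)
    calc prodT d N T (a + 1 + 1 + s) * Ti d N T (a + 1 + 1 + s + 1) * Ti d N T (a + 1)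
        = prodT d N T (a + 1 + 1 + s) * (Ti d N T (a + 1 + 1 + s + 1) * Ti d N T (a + 1)) := by
          rw [mul_assoc]
      _ = prodT d N T (a + 1 + 1 + s) * (Ti d N T (a + 1) * Ti d N T (a + 1 + 1 + s + 1)) := by
          rw [hc.eq]
      _ = prodT d N T (a + 1 + 1 + s) * Ti d N T (a + 1) * Ti d N T (a + 1 + 1 + s + 1) := by
          rw [mul_assoc]
      _ = Ti d N T (a + 1 + 1) * prodT d N T (a + 1 + 1 + s) * Ti d N T (a + 1 + 1 + s + 1) := by
          rw [c_Ti_aux hb s N (by omega)]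
      _ = Ti d N T (a + 1 + 1) * (prodT d N T (a + 1 + 1 + s) * Ti d N T (a + 1 + 1 + s + 1)) := by
          rw [mul_assoc]

lemma c_Ti (hb : Braided d T) {N i : ℕ} (h1 : 1 ≤ i) (h2 : i + 2 ≤ N) :
    prodT d N T (N - 1) * Ti d N T i = Ti d N T (i + 1) * prodT d N T (N - 1) := by
  obtain ⟨a, rfl⟩ : ∃ a, i = a + 1 := ⟨i - 1, by omega⟩
  obtain ⟨s, rfl⟩ : ∃ s, N = a + 3 + s := ⟨N - (a + 3), by omega⟩
  have hN1 : a + 3 + s - 1 = a + 1 + 1 + s := by omega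
  rw [hN1]
  exact c_Ti_aux hb s (a + 3 + s) le_rfl

/-! #### The subalgebra generated by `T_1, …, T_{m-1}` -/

inductive InAlg (d : ℕ) (T : Matrix (Fin d × Fin d) (Fin d × Fin d) ℂ) :
    (m : ℕ) → Matrix (Fin m → Fin d) (Fin m → Fin d) ℂ → Prop
  | one (m : ℕ) : InAlg d T m 1
  | zero (m : ℕ) : InAlg d T m 0
  | gen (m i : ℕ) (h1 : 1 ≤ i) (h2 : i < m) : InAlg d T m (Ti d m T i)
  | add {m : ℕ} {A B : Matrix (Fin m → Fin d) (Fin m → Fin d) ℂ} :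
      InAlg d T m A → InAlg d T m B → InAlg d T m (A + B)
  | mul {m : ℕ} {A B : Matrix (Fin m → Fin d) (Fin m → Fin d) ℂ} :
      InAlg d T m A → InAlg d T m B → InAlg d T m (A * B)

lemma prodT_inAlg {m : ℕ} : ∀ {k : ℕ}, k < m → InAlg d T m (prodT d m T k)
  | 0, _ => by rw [prodT_zero]; exact InAlg.one m
  | (k + 1), h => by
    rw [prodT_succ]
    exact InAlg.mul (prodT_inAlg (by omega)) (InAlg.gen m (k + 1) (by omega) h)

lemma Rmat_inAlg {m : ℕ} : InAlg d T m (Rmat d m T) := by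
  rw [Rmat]
  refine Finset.sum_induction _ _ (fun A B hA hB => InAlg.add hA hB) (InAlg.zero m) ?_
  intro k hk
  exact prodT_inAlg (Finset.mem_range.mp hk)

lemma inAlg_oneTensor {m : ℕ} {A : Matrix (Fin m → Fin d) (Fin m → Fin d) ℂ}
    (hA : InAlg d T m A) : InAlg d T (m + 1) (oneTensor d m A) := by
  induction hA with
  | one => rw [oneTensor_one]; exact InAlg.one _
  | zero => rw [oneTensor_zero]; exact InAlg.zero _
  | gen i h1 h2 =>
    rw [oneTensor_Ti h1 h2]
    exact InAlg.gen _ (i + 1) (by omega) (by omega)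
  | add hA hB ihA ihB => rw [oneTensor_add]; exact InAlg.add ihA ihB
  | mul hA hB ihA ihB => rw [oneTensor_mul]; exact InAlg.mul ihA ihB

lemma Pmat_inAlg : ∀ m : ℕ, InAlg d T m (Pmat d T m)
  | 0 => InAlg.one 0
  | (m + 1) => by
    show InAlg d T (m + 1) (oneTensor d m (Pmat d T m) * Rmat d (m + 1) T)
    exact InAlg.mul (inAlg_oneTensor (Pmat_inAlg m)) Rmat_inAlg

lemma c_comm_of_inAlg (hb : Braided d T) {m : ℕ}
    {A : Matrix (Fin m → Fin d) (Fin m → Fin d) ℂ} (hA : InAlg d T m A) :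
    prodT d (m + 1) T m * tensorOne d m A = oneTensor d m A * prodT d (m + 1) T m := by
  induction hA with
  | one => rw [tensorOne_one, oneTensor_one, mul_one, one_mul]
  | zero => rw [tensorOne_zero, oneTensor_zero, mul_zero, zero_mul]
  | gen i h1 h2 =>
    rw [tensorOne_Ti h1 (by omega), oneTensor_Ti h1 h2]
    exact c_Ti hb h1 (by omega)
  | add hA hB ihA ihB => rw [tensorOne_add, oneTensor_add, mul_add, add_mul, ihA, ihB]
  | mul hA hB ihA ihB =>
    rw [tensorOne_mul, oneTensor_mul, ← mul_assoc, ihA, mul_assoc, ihB, mul_assoc]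

/-! #### The right factorisation of `P` -/

/-- Suffix products `T_{N-k} T_{N-k+1} ⋯ T_{N-1}` on `H^{⊗N}`. -/
noncomputable def sufProd (d N : ℕ) (T : Matrix (Fin d × Fin d) (Fin d × Fin d) ℂ) :
    ℕ → Matrix (Fin N → Fin d) (Fin N → Fin d) ℂ
  | 0 => 1
  | (k + 1) => Ti d N T (N - (k + 1)) * sufProd d N T k

/-- `R̃_N = 1 + T_{N-1} + T_{N-2} T_{N-1} + ⋯ + T_1 T_2 ⋯ T_{N-1}` on `H^{⊗N}`. -/
noncomputable def Rtilde (d N : ℕ) (T : Matrix (Fin d × Fin d) (Fin d × Fin d) ℂ) :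
    Matrix (Fin N → Fin d) (Fin N → Fin d) ℂ :=
  ∑ k ∈ Finset.range N, sufProd d N T k

lemma sufProd_eq_list {N : ℕ} : ∀ {k : ℕ}, k ≤ N →
    sufProd d N T k = ((List.range k).map (fun j => Ti d N T (N - k + j))).prod
  | 0, _ => by simp [sufProd]
  | (k + 1), h => by
    rw [sufProd, sufProd_eq_list (show k ≤ N by omega), List.range_succ_eq_map]
    simp only [List.map_cons, List.prod_cons, List.map_map]
    have hh : N - (k + 1) + 0 = N - (k + 1) := by omega
    rw [hh]
    have hl : (List.range k).map ((fun j => Ti d N T (N - (k + 1) + j)) ∘ Nat.succ)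
        = (List.range k).map (fun j => Ti d N T (N - k + j)) := by
      refine List.map_congr_left fun j hj => ?_
      simp only [Function.comp]
      have : N - (k + 1) + Nat.succ j = N - k + j := by omega
      rw [this]
    rw [hl]

lemma prodT_eq_sufProd {m : ℕ} : prodT d (m + 1) T m = sufProd d (m + 1) T m := by
  rw [sufProd_eq_list (show m ≤ m + 1 by omega), prodT]
  refine congrArg List.prod ?_
  refine List.map_congr_left fun j hj => ?_
  have : j + 1 = m + 1 - m + j := by omega
  rw [this]

lemma oneTensor_sufProd {n : ℕ} : ∀ {k : ℕ}, k ≤ n →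
    oneTensor d (n + 1) (sufProd d (n + 1) T k) = sufProd d (n + 2) T k
  | 0, _ => by rw [show sufProd d (n + 1) T 0 = 1 from rfl, oneTensor_one]; rfl
  | (k + 1), h => by
    rw [sufProd, oneTensor_mul, oneTensor_sufProd (show k ≤ n by omega),
      oneTensor_Ti (show 1 ≤ n + 1 - (k + 1) by omega) (show n + 1 - (k + 1) < n + 1 by omega)]
    rw [show n + 1 - (k + 1) + 1 = n + 2 - (k + 1) from by omega]
    rfl

lemma tensorOne_prodT {n : ℕ} : ∀ {k : ℕ}, k < n →
    tensorOne d n (prodT d n T k) = prodT d (n + 1) T k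
  | 0, _ => by rw [prodT_zero, tensorOne_one, prodT_zero]
  | (k + 1), h => by
    rw [prodT_succ, tensorOne_mul, tensorOne_prodT (show k < n by omega),
      tensorOne_Ti (show 1 ≤ k + 1 by omega) h, prodT_succ]

lemma tensorOne_Rmat {n : ℕ} :
    tensorOne d n (Rmat d n T) = ∑ k ∈ Finset.range n, prodT d (n + 1) T k := by
  rw [Rmat, tensorOne_sum]
  refine Finset.sum_congr rfl fun k hk => ?_
  exact tensorOne_prodT (Finset.mem_range.mp hk)

lemma Pmat_zero : Pmat d T 0 = 1 := rfl

lemma Pmat_succ {n : ℕ} :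
    Pmat d T (n + 1) = oneTensor d n (Pmat d T n) * Rmat d (n + 1) T := rfl

/-- The key factorisation `P_{n+1} = R̃_{n+1} (P_n ⊗ 1)`. -/
lemma Pmat_factor (hb : Braided d T) :
    ∀ n : ℕ, Pmat d T (n + 1) = Rtilde d (n + 1) T * tensorOne d n (Pmat d T n)
  | 0 => by
    rw [Pmat_succ, Pmat_zero, oneTensor_one, tensorOne_one, one_mul, mul_one]
    rw [Rmat, Rtilde, Finset.sum_range_one, Finset.sum_range_one, prodT_zero]
    rfl
  | (n + 1) => by
    rw [Pmat_succ (n := n + 1)]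
    have hR : Rmat d (n + 2) T =
        tensorOne d (n + 1) (Rmat d (n + 1) T) + prodT d (n + 2) T (n + 1) := by
      rw [Rmat, Finset.sum_range_succ, tensorOne_Rmat]
    rw [hR, mul_add]
    have h2 : oneTensor d (n + 1) (Pmat d T (n + 1)) * prodT d (n + 2) T (n + 1)
        = prodT d (n + 2) T (n + 1) * tensorOne d (n + 1) (Pmat d T (n + 1)) :=
      (c_comm_of_inAlg hb (Pmat_inAlg (n + 1))).symm
    have h1 : oneTensor d (n + 1) (Pmat d T (n + 1)) * tensorOne d (n + 1) (Rmat d (n + 1) T)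
        = oneTensor d (n + 1) (Rtilde d (n + 1) T) * tensorOne d (n + 1) (Pmat d T (n + 1)) := by
      conv_lhs => rw [Pmat_factor hb n]
      rw [oneTensor_mul, oneTensor_tensorOne, mul_assoc, ← tensorOne_mul, ← Pmat_succ]
    rw [h1, h2, ← add_mul]
    congr 1
    symm
    rw [Rtilde, Finset.sum_range_succ, ← prodT_eq_sufProd]
    congr 1
    rw [Rtilde, oneTensor_sum]
    refine Finset.sum_congr rfl fun k hk => ?_
    exact (oneTensor_sufProd (by have := Finset.mem_range.mp hk; omega)).symm

/-! #### `mulVec` lemmas -/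

lemma tensorOne_mulVec {k : ℕ} (A : Matrix (Fin k → Fin d) (Fin k → Fin d) ℂ)
    (Z : (Fin (k + 1) → Fin d) → ℂ) (u : Fin (k + 1) → Fin d) :
    (tensorOne d k A).mulVec Z u =
      A.mulVec (fun v => Z (Fin.snoc v (u (Fin.last k)))) (fun i => u i.castSucc) := by
  simp only [Matrix.mulVec, dotProduct, tensorOne]
  rw [← Fintype.sum_equiv (snocE d k)
      (fun p => (A (fun i => u i.castSucc) p.2 *
        (if u (Fin.last k) = p.1 then (1 : ℂ) else 0)) * Z (Fin.snoc p.2 p.1))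
      (fun u' => (A (fun i => u i.castSucc) (fun i => u' i.castSucc) *
        (if u (Fin.last k) = u' (Fin.last k) then (1 : ℂ) else 0)) * Z u')
      (fun p => by simp [snocE])]
  rw [Fintype.sum_prod_type]
  calc
    (∑ a : Fin d, ∑ v : Fin k → Fin d,
        (A (fun i => u i.castSucc) v * (if u (Fin.last k) = a then (1 : ℂ) else 0)) *
          Z (Fin.snoc v a))
        = ∑ a : Fin d, if u (Fin.last k) = a then
            (∑ v : Fin k → Fin d, A (fun i => u i.castSucc) v * Z (Fin.snoc v a)) else 0 := by
      refine Finset.sum_congr rfl fun a _ => ?_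
      by_cases h : u (Fin.last k) = a
      · simp [h]
      · simp [h]
    _ = ∑ v : Fin k → Fin d, A (fun i => u i.castSucc) v * Z (Fin.snoc v (u (Fin.last k))) := by
      rw [Finset.sum_ite_eq]
      exact if_pos (Finset.mem_univ _)

end Aux

/-- Let `T` be a braided self-adjoint contraction on `H ⊗ H`.  For any `X ∈ ker P_n` in
`H^{⊗n}` and any `Y ∈ H^{⊗m}`, the tensor `X ⊗ Y` lies in `ker P_{n+m}`. -/
theorem tensor_mem_ker_P (d n m : ℕ) (T : Matrix (Fin d × Fin d) (Fin d × Fin d) ℂ)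
    (hsa : T.IsHermitian) (hcontr : ‖Matrix.toEuclideanCLM (𝕜 := ℂ) T‖ ≤ 1)
    (hbraid : Braided d T)
    (X : (Fin n → Fin d) → ℂ) (hX : (Pmat d T n).mulVec X = 0)
    (Y : (Fin m → Fin d) → ℂ) :
    (Pmat d T (n + m)).mulVec (tensorVec X Y) = 0 := by
  clear hsa hcontr
  induction m with
  | zero =>
    funext u
    have h0 : (Pmat d T (n + 0)).mulVec (tensorVec X Y) u
        = ((Pmat d T (n + 0)).mulVec X u) * Y (fun j : Fin 0 => j.elim0) := by
      simp only [Matrix.mulVec, dotProduct, tensorVec]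
      rw [Finset.sum_mul]
      refine Finset.sum_congr rfl fun v _ => ?_
      have hv : (fun i : Fin n => v (Fin.castAdd 0 i)) = v := by
        funext i
        exact congrArg v (Fin.ext rfl)
      have hy : (fun j : Fin 0 => v (Fin.natAdd n j)) = (fun j : Fin 0 => j.elim0) := by
        funext j
        exact j.elim0
      rw [hv, hy]
      ring
    have hX0 : (Pmat d T (n + 0)).mulVec X = 0 := hX
    rw [h0, congrFun hX0 u]
    simp
  | succ m ih =>
    show (Pmat d T (n + m + 1)).mulVec (tensorVec (d := d) (n := n) (m := m + 1) X Y) = 0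
    rw [Pmat_factor hbraid (n + m), ← Matrix.mulVec_mulVec]
    have hz : (tensorOne d (n + m) (Pmat d T (n + m))).mulVec
        (tensorVec (d := d) (n := n) (m := m + 1) X Y) = 0 := by
      funext u
      rw [tensorOne_mulVec]
      have harg : (fun v : Fin (n + m) → Fin d =>
            tensorVec (d := d) (n := n) (m := m + 1) X Y (Fin.snoc v (u (Fin.last (n + m)))))
          = tensorVec (d := d) (n := n) (m := m) X
              (fun w : Fin m → Fin d => Y (Fin.snoc w (u (Fin.last (n + m))))) := by
        funext v
        simp only [tensorVec]
        congr 1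
        · congr 1
          funext i
          have hidx : (Fin.castAdd (m + 1) i : Fin (n + (m + 1)))
              = Fin.castSucc (Fin.castAdd m i) := Fin.ext rfl
          rw [hidx, Fin.snoc_castSucc]
        · congr 1
          funext j
          refine Fin.lastCases ?_ (fun j' => ?_) j
          · rw [Fin.snoc_last]
            have hidx : (Fin.natAdd n (Fin.last m) : Fin (n + (m + 1)))
                = Fin.last (n + m) := Fin.ext rfl
            rw [hidx]
            exact Fin.snoc_last _ _
          · rw [Fin.snoc_castSucc]
            have hidx : (Fin.natAdd n (Fin.castSucc j') : Fin (n + (m + 1)))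
                = Fin.castSucc (Fin.natAdd n j') := Fin.ext rfl
            rw [hidx]
            exact Fin.snoc_castSucc _ _ _
      rw [harg, ih]
      simp
    rw [hz, Matrix.mulVec_zero]

end Wick
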